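/- Polynomial-versus-exponential inequality used in the reverse Chernoff proof: for every real ε with 0 < ε ≤ 1/2, every positive integer n with ε²·n > 6, and every real l₀ with 1 ≤ l₀ ≤ n/2, one has (ε·n/2 − 1)·(1/(e·√(2π·l₀))) ≥ e^{−ε²·n/2}. -/

import Mathlib

/-- **Polynomial-versus-exponential inequality used in the reverse Chernoff proof.**
For every `0 < ε ≤ 1/2`, every `n ≥ 1` with `ε² n > 6`, and every real `1 ≤ l₀ ≤ n/2`,
`(ε n / 2 - 1) · (1/(e √(2π l₀))) ≥ e^{-ε² n / 2}`. -/
theorem poly_vs_exp_inequality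
    (ε : ℝ) (hε : 0 < ε) (hε2 : ε ≤ 1 / 2)
    (n : ℕ) (hn : 0 < n) (h6 : 6 < ε ^ 2 * n)
    (l₀ : ℝ) (hl1 : 1 ≤ l₀) (hl2 : l₀ ≤ n / 2) :
    Real.exp (-(ε ^ 2 * n / 2))
      ≤ (ε * n / 2 - 1) * (1 / (Real.exp 1 * Real.sqrt (2 * Real.pi * l₀))) := by
  have hπ := Real.pi_pos
  have hπ2 : Real.pi < 3.15 := Real.pi_lt_d2
  set x : ℝ := ε ^ 2 * (n : ℝ) / 2 with hx
  have hx3 : 3 < x := by simp only [hx]; linarith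
  have hl0 : (0:ℝ) < 2 * Real.pi * l₀ := by positivity
  have hs : 0 < Real.sqrt (2 * Real.pi * l₀) := Real.sqrt_pos.mpr hl0
  rw [mul_one_div, le_div_iff₀ (by positivity)]
  have hsu : Real.sqrt (2 * Real.pi * l₀) ≤ Real.sqrt (Real.pi * n) :=
    Real.sqrt_le_sqrt (by nlinarith)
  set u := Real.sqrt (Real.pi * n) with hu
  have hu0 : 0 ≤ u := Real.sqrt_nonneg _
  have hu2 : u ^ 2 = Real.pi * n := Real.sq_sqrt (by positivity)
  have hv2 : (ε * u) ^ 2 = 2 * Real.pi * x := by rw [mul_pow, hu2, hx]; ring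
  have hv1 : ε * u ≤ Real.pi * x + 1 / 2 := by nlinarith [sq_nonneg (ε * u - 1)]
  have hE : (0:ℝ) < Real.exp (x - 1) := Real.exp_pos _
  have hexp : ((x + 2) / 3) ^ 3 ≤ Real.exp (x - 1) := by
    have h1 : (x - 1) / 3 + 1 ≤ Real.exp ((x - 1) / 3) := Real.add_one_le_exp _
    calc ((x + 2) / 3) ^ 3 = ((x - 1) / 3 + 1) ^ 3 := by ring_nf
      _ ≤ Real.exp ((x - 1) / 3) ^ 3 := by
          apply pow_le_pow_left₀ (by linarith) h1
      _ = Real.exp (x - 1) := by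
          rw [← Real.exp_nat_mul]; congr 1; push_cast; ring
  -- key polynomial inequality
  have hpoly : Real.pi * x + 1 / 2 ≤ ((x + 2) / 3) ^ 3 * (x - 1 / 2) := by
    nlinarith [sq_nonneg (x - 3), sq_nonneg x, mul_pos hπ (by linarith : (0:ℝ) < x)]
  have hkey : Real.pi * x + 1 / 2 ≤ Real.exp (x - 1) * (x - ε) := by
    calc Real.pi * x + 1 / 2 ≤ ((x + 2) / 3) ^ 3 * (x - 1 / 2) := hpoly
      _ ≤ Real.exp (x - 1) * (x - ε) := by
          apply mul_le_mul hexp (by linarith) (by linarith) (le_of_lt hE)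
  -- now conclude
  have hmain : Real.exp (-x) * (Real.exp 1 * u) ≤ ε * ↑n / 2 - 1 := by
    rw [← mul_le_mul_iff_right₀ hε]
    have he : Real.exp (1 - x) = Real.exp 1 * Real.exp (-x) := by
      rw [← Real.exp_add]; ring_nf
    have h1 : ε * (Real.exp (-x) * (Real.exp 1 * u)) = Real.exp (1 - x) * (ε * u) := by
      rw [he]; ring
    have h2 : ε * (ε * ↑n / 2 - 1) = x - ε := by rw [hx]; ring
    rw [h1, h2]
    have h3 : Real.exp (1 - x) * (ε * u) ≤ Real.exp (1 - x) * (Real.pi * x + 1 / 2) :=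
      mul_le_mul_of_nonneg_left hv1 (le_of_lt (Real.exp_pos _))
    have h4 : Real.exp (1 - x) * Real.exp (x - 1) = 1 := by
      rw [← Real.exp_add]; norm_num
    nlinarith [Real.exp_pos (1 - x)]
  calc Real.exp (-x) * (Real.exp 1 * Real.sqrt (2 * Real.pi * l₀))
      ≤ Real.exp (-x) * (Real.exp 1 * u) := by
        apply mul_le_mul_of_nonneg_left _ (le_of_lt (Real.exp_pos _))
        exact mul_le_mul_of_nonneg_left hsu (le_of_lt (Real.exp_pos _))
    _ ≤ ε * ↑n / 2 - 1 := hmain
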